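/- arXiv:2009.02272 — 7 statements merged into one kernel-verified Lean document; each statement's English description precedes it below -/
import Mathlib

section
/- For every natural number n ≥ 1 and every k with 1 ≤ k ≤ n, the identity p^B_{n,k}(x) = (1−x)^{n+1} · Σ_{m≥0} (4m)(2m−1)^{k−1}(2m+1)^{n−k} x^m holds in the ring of formal power series ℝ⟦x⟧ (where the polynomial p^B_{n,k} is regarded as a power series). -/
open Polynomial PowerSeries

/-- The polynomials `p^B_{n,k}` defined recursively as in
Proposition (e): `p^B_{0,0} = 1`, `p^B_{0,1} = x`,
`p^B_{n+1,0} = ∑_{i=0}^{n+1} p^B_{n,i}`,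
`p^B_{n+1,k} = 2x ∑_{i=0}^{k-1} p^B_{n,i} + 2 ∑_{i=k}^{n+1} p^B_{n,i}` for `1 ≤ k ≤ n+1`, and
`p^B_{n+1,n+2} = x ∑_{i=0}^{n+1} p^B_{n,i}`. -/
noncomputable def pB : ℕ → ℕ → Polynomial ℝ
  | 0, 0 => 1
  | 0, 1 => Polynomial.X
  | 0, _ + 2 => 0
  | n + 1, 0 => ∑ i ∈ Finset.range (n + 2), pB n i
  | n + 1, k + 1 =>
      if k + 1 ≤ n + 1 then
        2 * Polynomial.X * (∑ i ∈ Finset.range (k + 1), pB n i) +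
          2 * ∑ i ∈ Finset.Icc (k + 1) (n + 1), pB n i
      else if k + 1 = n + 2 then
        Polynomial.X * ∑ i ∈ Finset.range (n + 2), pB n i
      else 0
  termination_by n _ => n

namespace PBAux

/-- coefficient function for `k = 0` -/
def g0 (n : ℕ) : ℕ → ℝ := fun m => (2*m+1)^n
/-- coefficient function for middle `k = a+1`, `a+b+1 = n` -/
def gm (a b : ℕ) : ℕ → ℝ := fun m => 4*m*((2*m-1)^a*(2*m+1)^b)
/-- coefficient function for `k = n+1` -/
def gt' (n : ℕ) : ℕ → ℝ := fun m => if m = 0 then 0 else (2*m-1)^n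

lemma coe_two : ((2 : Polynomial ℝ) : PowerSeries ℝ) = 2 := by
  rw [show (2 : Polynomial ℝ) = 1 + 1 by norm_num, Polynomial.coe_add, Polynomial.coe_one]
  norm_num

lemma coeff_two_mul (f : PowerSeries ℝ) (m : ℕ) :
    PowerSeries.coeff m (2 * f) = 2 * PowerSeries.coeff m f := by
  have h : (2 : PowerSeries ℝ) = PowerSeries.C 2 := by
    simp [← map_ofNat (PowerSeries.C (R := ℝ)) 2]
  rw [h, PowerSeries.coeff_C_mul]

lemma coeff_X_mul' (f : PowerSeries ℝ) (m : ℕ) :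
    PowerSeries.coeff m (PowerSeries.X * f)
      = if m = 0 then 0 else PowerSeries.coeff (m-1) f := by
  cases m with
  | zero => simp [PowerSeries.coeff_zero_eq_constantCoeff]
  | succ s => simp [PowerSeries.coeff_succ_X_mul]

lemma coeff_one_sub_X_mul (f : PowerSeries ℝ) (m : ℕ) :
    PowerSeries.coeff m ((1 - PowerSeries.X) * f)
      = PowerSeries.coeff m f - (if m = 0 then 0 else PowerSeries.coeff (m-1) f) := by
  rw [sub_mul, one_mul, map_sub, coeff_X_mul']

lemma sum_pow_aux (x : ℝ) (t : ℕ) :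
    2 * ∑ i ∈ Finset.range t, x ^ i * (x+2) ^ (t - 1 - i) = (x+2) ^ t - x ^ t := by
  have h := geom_sum₂_mul x (x+2) t
  have h2 : (x - (x+2)) = -2 := by ring
  rw [h2] at h
  linarith

/-- the "bracket": the coe of the full row sum -/
lemma bracket (n : ℕ)
    (h0 : (pB n 0 : PowerSeries ℝ) = (1 - PowerSeries.X)^(n+1) * PowerSeries.mk (g0 n))
    (hm : ∀ a b, a + b + 1 = n →
      (pB n (a+1) : PowerSeries ℝ) = (1 - PowerSeries.X)^(n+1) * PowerSeries.mk (gm a b))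
    (ht : (pB n (n+1) : PowerSeries ℝ) = (1 - PowerSeries.X)^(n+1) * PowerSeries.mk (gt' n)) :
    ((∑ i ∈ Finset.range (n+2), pB n i : Polynomial ℝ) : PowerSeries ℝ)
      = (1 - PowerSeries.X)^(n+1) *
        PowerSeries.mk (fun m => g0 (n+1) m - gt' (n+1) m) := by
  have hc : ((∑ i ∈ Finset.range (n+2), pB n i : Polynomial ℝ) : PowerSeries ℝ)
      = ∑ i ∈ Finset.range (n+2), (pB n i : PowerSeries ℝ) := by
    rw [← Polynomial.coeToPowerSeries.ringHom_apply, map_sum]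
    rfl
  rw [hc, Finset.sum_range_succ, Finset.sum_range_succ', h0, ht]
  have hmid : ∀ i ∈ Finset.range n, (pB n (i+1) : PowerSeries ℝ)
      = (1 - PowerSeries.X)^(n+1) * PowerSeries.mk (gm i (n-1-i)) := by
    intro i hi
    simp only [Finset.mem_range] at hi
    exact hm i (n-1-i) (by omega)
  rw [Finset.sum_congr rfl hmid, ← Finset.mul_sum]
  rw [← mul_add, ← mul_add]
  congr 1
  ext m
  simp only [map_add, PowerSeries.coeff_mk, map_sum]
  have hsum : (∑ i ∈ Finset.range n, gm i (n-1-i) m)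
      = 2*(m:ℝ) * ((2*m+1)^n - (2*m-1)^n) := by
    have e : ∀ i ∈ Finset.range n, gm i (n-1-i) m
        = 4*(m:ℝ) * ((2*(m:ℝ)-1)^i * ((2*(m:ℝ)-1)+2)^(n-1-i)) := by
      intro i hi; simp only [gm]; ring
    rw [Finset.sum_congr rfl e, ← Finset.mul_sum]
    have h := sum_pow_aux (2*(m:ℝ)-1) n
    have hb : (2*(m:ℝ)-1+2) = 2*(m:ℝ)+1 := by ring
    rw [hb] at h ⊢
    linear_combination (2*(m:ℝ)) * h
  rw [hsum]
  simp only [g0, gt']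
  rcases m with _ | s
  · norm_num
  · simp only [Nat.succ_ne_zero, if_false]
    push_cast
    ring_nf

/-- Main induction: all three identities simultaneously. -/
lemma main (n : ℕ) :
    ((pB n 0 : PowerSeries ℝ) = (1 - PowerSeries.X)^(n+1) * PowerSeries.mk (g0 n))
    ∧ (∀ a b, a + b + 1 = n →
        (pB n (a+1) : PowerSeries ℝ) = (1 - PowerSeries.X)^(n+1) * PowerSeries.mk (gm a b))
    ∧ ((pB n (n+1) : PowerSeries ℝ) = (1 - PowerSeries.X)^(n+1) * PowerSeries.mk (gt' n)) := by
  induction n with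
  | zero =>
    refine ⟨?_, fun a b hab => by omega, ?_⟩
    · rw [show pB 0 0 = 1 from by rw [pB], Polynomial.coe_one, pow_one]
      ext m
      rw [coeff_one_sub_X_mul, PowerSeries.coeff_one]
      simp only [PowerSeries.coeff_mk, g0]
      rcases m with _ | s <;> norm_num
    · rw [show pB 0 (0+1) = Polynomial.X from by rw [pB], Polynomial.coe_X, pow_one]
      ext m
      rw [PowerSeries.coeff_X, coeff_one_sub_X_mul]
      simp only [PowerSeries.coeff_mk, gt']
      rcases m with _ | s
      · norm_num
      · rcases s with _ | t <;> norm_num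
  | succ n IH =>
    obtain ⟨h0, hm, ht⟩ := IH
    have hbr := bracket n h0 hm ht
    refine ⟨?_, ?_, ?_⟩
    · -- k = 0
      rw [show pB (n+1) 0 = ∑ i ∈ Finset.range (n+2), pB n i from by rw [pB]]
      rw [hbr]
      have hE : PowerSeries.mk (fun m => g0 (n+1) m - gt' (n+1) m)
          = (1 - PowerSeries.X) * PowerSeries.mk (g0 (n+1)) := by
        ext m
        rw [coeff_one_sub_X_mul]
        simp only [PowerSeries.coeff_mk, g0, gt']
        rcases m with _ | s
        · norm_num
        · simp only [Nat.succ_ne_zero, if_false, Nat.succ_sub_one]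
          push_cast
          ring_nf
      rw [hE]
      ring
    · -- middle
      intro a b hab
      have hpB : pB (n+1) (a+1)
          = 2 * Polynomial.X * (∑ i ∈ Finset.range (a+1), pB n i) +
              2 * ∑ i ∈ Finset.Icc (a+1) (n+1), pB n i := by
        rw [pB]
        simp [show a + 1 ≤ n + 1 by omega]
      have hn : n = a + b := by omega
      subst hn
      -- first sub-bracket
      have hA : ((∑ i ∈ Finset.range (a+1), pB (a+b) i : Polynomial ℝ) : PowerSeries ℝ)
          = (1 - PowerSeries.X)^(a+b+1) *
            PowerSeries.mk (fun m => g0 (a+b) m + ∑ i ∈ Finset.range a, gm i (a+b-1-i) m) := by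
        have hc : ((∑ i ∈ Finset.range (a+1), pB (a+b) i : Polynomial ℝ) : PowerSeries ℝ)
            = ∑ i ∈ Finset.range (a+1), (pB (a+b) i : PowerSeries ℝ) := by
          rw [← Polynomial.coeToPowerSeries.ringHom_apply, map_sum]; rfl
        rw [hc, Finset.sum_range_succ', h0]
        have hmid : ∀ i ∈ Finset.range a, (pB (a+b) (i+1) : PowerSeries ℝ)
            = (1 - PowerSeries.X)^(a+b+1) * PowerSeries.mk (gm i (a+b-1-i)) := by
          intro i hi
          simp only [Finset.mem_range] at hi
          exact hm i (a+b-1-i) (by omega)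
        rw [Finset.sum_congr rfl hmid, ← Finset.mul_sum, ← mul_add]
        congr 1
        ext m
        simp only [map_add, map_sum, PowerSeries.coeff_mk]
        ring
      -- second sub-bracket
      have hB : ((∑ i ∈ Finset.Icc (a+1) (a+b+1), pB (a+b) i : Polynomial ℝ) : PowerSeries ℝ)
          = (1 - PowerSeries.X)^(a+b+1) *
            PowerSeries.mk (fun m => (∑ j ∈ Finset.range b, gm (a+j) (b-1-j) m) + gt' (a+b) m) := by
        have hc : ((∑ i ∈ Finset.Icc (a+1) (a+b+1), pB (a+b) i : Polynomial ℝ) : PowerSeries ℝ)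
            = ∑ i ∈ Finset.Icc (a+1) (a+b+1), (pB (a+b) i : PowerSeries ℝ) := by
          rw [← Polynomial.coeToPowerSeries.ringHom_apply, map_sum]; rfl
        rw [hc, show Finset.Icc (a+1) (a+b+1) = Finset.Ico (a+1) (a+b+2) by
              exact (Finset.Ico_add_one_right_eq_Icc (a+1) (a+b+1)).symm,
            Finset.sum_Ico_eq_sum_range,
            show a+b+2-(a+1) = b+1 by omega, Finset.sum_range_succ,
            show a+1+b = a+b+1 by omega, ht]
        have hmid : ∀ j ∈ Finset.range b, (pB (a+b) (a+1+j) : PowerSeries ℝ)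
            = (1 - PowerSeries.X)^(a+b+1) * PowerSeries.mk (gm (a+j) (b-1-j)) := by
          intro j hj
          simp only [Finset.mem_range] at hj
          rw [show a+1+j = (a+j)+1 by omega]
          exact hm (a+j) (b-1-j) (by omega)
        rw [Finset.sum_congr rfl hmid, ← Finset.mul_sum, ← mul_add]
        congr 1
        ext m
        simp only [map_add, map_sum, PowerSeries.coeff_mk]
      -- the coercion of the recursion
      have hcast : ((pB (a+b+1) (a+1) : Polynomial ℝ) : PowerSeries ℝ)
          = 2 * PowerSeries.X *
              ((∑ i ∈ Finset.range (a+1), pB (a+b) i : Polynomial ℝ) : PowerSeries ℝ) +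
            2 * ((∑ i ∈ Finset.Icc (a+1) (a+b+1), pB (a+b) i : Polynomial ℝ) : PowerSeries ℝ) := by
        rw [hpB]
        push_cast [coe_two]
        ring
      rw [hcast, hA, hB]
      -- key power-series identity
      have hE : 2 * (PowerSeries.X *
            PowerSeries.mk (fun m => g0 (a+b) m + ∑ i ∈ Finset.range a, gm i (a+b-1-i) m)) +
          2 * PowerSeries.mk (fun m => (∑ j ∈ Finset.range b, gm (a+j) (b-1-j) m) + gt' (a+b) m)
          = (1 - PowerSeries.X) * PowerSeries.mk (gm a b) := by
        ext m
        simp only [map_add, coeff_two_mul, coeff_X_mul', coeff_one_sub_X_mul,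
          PowerSeries.coeff_mk]
        rcases m with _ | s
        · simp [gm, gt']
        · simp only [Nat.succ_ne_zero, if_false, Nat.succ_sub_one]
          have e1 : (∑ i ∈ Finset.range a, gm i (a+b-1-i) s)
              = 4*(s:ℝ) * (2*(s:ℝ)-1+2)^b *
                ∑ i ∈ Finset.range a, (2*(s:ℝ)-1)^i * (2*(s:ℝ)-1+2)^(a-1-i) := by
            rw [Finset.mul_sum]
            refine Finset.sum_congr rfl fun i hi => ?_
            simp only [Finset.mem_range] at hi
            simp only [gm]
            rw [show a+b-1-i = b + (a-1-i) by omega, pow_add]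
            ring
          have e2 : (∑ j ∈ Finset.range b, gm (a+j) (b-1-j) (s+1))
              = 4*((s:ℝ)+1) * (2*(s:ℝ)+1)^a *
                ∑ j ∈ Finset.range b, (2*(s:ℝ)+1)^j * (2*(s:ℝ)+1+2)^(b-1-j) := by
            rw [Finset.mul_sum]
            refine Finset.sum_congr rfl fun j hj => ?_
            simp only [gm]
            push_cast
            rw [pow_add]
            ring
          have h1' := sum_pow_aux (2*(s:ℝ)-1) a
          have h2' := sum_pow_aux (2*(s:ℝ)+1) b
          rw [e1, e2]
          simp only [g0, gm, gt', Nat.succ_ne_zero, if_false]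
          push_cast
          linear_combination (4*(s:ℝ)*(2*(s:ℝ)+1)^b) * h1'
            + (4*((s:ℝ)+1)*(2*(s:ℝ)+1)^a) * h2'
      linear_combination ((1 - PowerSeries.X)^(a+b+1) : PowerSeries ℝ) * hE
    · -- k = n+2
      have hpB : pB (n+1) (n+2)
          = Polynomial.X * ∑ i ∈ Finset.range (n+2), pB n i := by
        rw [pB]
        simp
      have hcast : ((pB (n+1) (n+2) : Polynomial ℝ) : PowerSeries ℝ)
          = PowerSeries.X *
              ((∑ i ∈ Finset.range (n+2), pB n i : Polynomial ℝ) : PowerSeries ℝ) := by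
        rw [hpB]
        push_cast
        ring
      rw [hcast, hbr]
      have hE : PowerSeries.X * PowerSeries.mk (fun m => g0 (n+1) m - gt' (n+1) m)
          = (1 - PowerSeries.X) * PowerSeries.mk (gt' (n+1)) := by
        ext m
        rw [coeff_X_mul', coeff_one_sub_X_mul]
        simp only [PowerSeries.coeff_mk]
        rcases m with _ | s
        · simp [gt']
        · simp only [Nat.succ_ne_zero, if_false, Nat.succ_sub_one, g0, gt']
          rcases s with _ | t
          · norm_num
          · simp only [Nat.succ_ne_zero, if_false]
            push_cast
            ring_nf
      linear_combination ((1 - PowerSeries.X)^(n+1) : PowerSeries ℝ) * hE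

end PBAux

/-- Proposition (f), middle case: for `1 ≤ k ≤ n`,
`p^B_{n,k}(x) = (1-x)^{n+1} ⬝ ∑_{m ≥ 0} (4m)(2m-1)^{k-1}(2m+1)^{n-k} x^m` in `ℝ⟦x⟧`. -/
theorem pB_powerSeries_identity (n k : ℕ) (hn : 1 ≤ n) (hk1 : 1 ≤ k) (hk2 : k ≤ n) :
    (pB n k : PowerSeries ℝ) =
      (1 - PowerSeries.X) ^ (n + 1) *
        PowerSeries.mk
          (fun m => (4 * m : ℝ) * (2 * m - 1) ^ (k - 1) * (2 * m + 1) ^ (n - k)) := by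
  obtain ⟨_, hm, _⟩ := PBAux.main n
  have h := hm (k-1) (n-k) (by omega)
  rw [show k - 1 + 1 = k by omega] at h
  rw [h]
  congr 1
  ext m
  simp only [PowerSeries.coeff_mk, PBAux.gm]
  ring
end

section
/- For every natural number n, p^B_{n,0}(x) = B_n(x); equivalently, p^B_{n,0}(x) = (1−x)^{n+1} · Σ_{m≥0} (2m+1)^n x^m in ℝ⟦x⟧. -/
open Polynomial PowerSeries

/-- Auxiliary: `bb n k m = (2m+1)^(n-k) * (2m-1)^k`. -/
noncomputable def bb (n k m : ℕ) : ℝ := (2 * (m : ℝ) + 1) ^ (n - k) * (2 * (m : ℝ) - 1) ^ k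

/-- Auxiliary: the coefficient functions `aa n k`. -/
noncomputable def aa (n k m : ℕ) : ℝ :=
  if k = 0 then bb n 0 m
  else if k ≤ n then bb n (k - 1) m + bb n k m
  else if k = n + 1 then (if m = 0 then 0 else bb n n m)
  else 0

lemma aa_of_mid (n k m : ℕ) (h1 : 1 ≤ k) (h2 : k ≤ n) :
    aa n k m = bb n (k - 1) m + bb n k m := by
  unfold aa
  rw [if_neg (by omega), if_pos h2]

lemma aa_of_top (n m : ℕ) :
    aa n (n + 1) m = (if m = 0 then 0 else bb n n m) := by
  unfold aa
  rw [if_neg (by omega), if_neg (by omega), if_pos rfl]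

lemma aa_of_big (n k m : ℕ) (_h : n + 2 ≤ k) : aa n k m = 0 := by
  unfold aa
  rw [if_neg (by omega), if_neg (by omega), if_neg (by omega)]

lemma bb_at_zero (n k : ℕ) (h : k ≤ n) : bb n k 0 = (-1 : ℝ) ^ k := by
  unfold bb
  norm_num

lemma aa_at_zero (n k : ℕ) (h : 1 ≤ k) : aa n k 0 = 0 := by
  rcases lt_or_ge n k with hn | hn
  · rcases Nat.lt_or_ge k (n + 2) with hk | hk
    · have : k = n + 1 := by omega
      subst this
      rw [aa_of_top]
      simp
    · rw [aa_of_big n k 0 hk]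
  · rw [aa_of_mid n k 0 h hn, bb_at_zero n (k - 1) (by omega), bb_at_zero n k hn]
    obtain ⟨t, rfl⟩ : ∃ t, k = t + 1 := ⟨k - 1, by omega⟩
    simp [pow_succ]

lemma bb_step (n j m : ℕ) (h : j ≤ n) :
    bb (n + 1) j m - bb (n + 1) (j + 1) m = 2 * bb n j m := by
  unfold bb
  have h1 : n + 1 - j = (n - j) + 1 := by omega
  have h2 : n + 1 - (j + 1) = n - j := by omega
  rw [h1, h2]
  ring

lemma two_sum_bb (n K m : ℕ) (h : K ≤ n + 1) :
    2 * ∑ j ∈ Finset.range K, bb n j m = bb (n + 1) 0 m - bb (n + 1) K m := by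
  rw [Finset.mul_sum]
  rw [Finset.sum_congr rfl (fun j hj => (bb_step n j m (by
    simp only [Finset.mem_range] at hj; omega)).symm)]
  exact Finset.sum_range_sub' (fun j => bb (n + 1) j m) K

lemma sum_aa_range (n k m : ℕ) (hk : k ≤ n) :
    ∑ i ∈ Finset.range (k + 1), aa n i m
      = 2 * ∑ j ∈ Finset.range (k + 1), bb n j m - bb n k m := by
  induction k with
  | zero => simp [aa]; ring
  | succ k ih =>
      have hk' : k ≤ n := by omega
      rw [Finset.sum_range_succ, ih hk',
        Finset.sum_range_succ (fun j => bb n j m) (k + 1),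
        aa_of_mid n (k + 1) m (by omega) hk]
      simp only [Nat.add_sub_cancel]
      ring

lemma sum_aa_range' (n k m : ℕ) (hk : k ≤ n) :
    ∑ i ∈ Finset.range (k + 1), aa n i m
      = bb (n + 1) 0 m - bb (n + 1) (k + 1) m - bb n k m := by
  rw [sum_aa_range n k m hk, two_sum_bb n (k + 1) m (by omega)]

lemma sum_aa_full (n m : ℕ) :
    ∑ i ∈ Finset.range (n + 2), aa n i m
      = bb (n + 1) 0 m - bb (n + 1) (n + 1) m - bb n n m
          + (if m = 0 then 0 else bb n n m) := by
  rw [show n + 2 = (n + 1) + 1 from rfl, Finset.sum_range_succ,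
    sum_aa_range' n n m le_rfl, aa_of_top]

lemma sum_aa_full_pos (n m : ℕ) :
    ∑ i ∈ Finset.range (n + 2), aa n i (m + 1)
      = bb (n + 1) 0 (m + 1) - bb (n + 1) (n + 1) (m + 1) := by
  rw [sum_aa_full]
  simp

lemma sum_aa_full_zero (n : ℕ) :
    ∑ i ∈ Finset.range (n + 2), aa n i 0 = 1 := by
  rw [sum_aa_full]
  rw [if_pos rfl, add_zero, bb_at_zero (n + 1) (n + 1) le_rfl, bb_at_zero n n le_rfl]
  have : bb (n + 1) 0 0 = 1 := by unfold bb; norm_num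
  rw [this, pow_succ]
  ring

/-- coefficient of `(1-X) * f` at `0` -/
lemma coeff_one_sub_X_mul_zero (f : PowerSeries ℝ) :
    (PowerSeries.coeff 0) ((1 - PowerSeries.X) * f) = PowerSeries.coeff 0 f := by
  rw [sub_mul, one_mul, map_sub, PowerSeries.coeff_zero_X_mul, sub_zero]

/-- coefficient of `(1-X) * f` at `m+1` -/
lemma coeff_one_sub_X_mul_succ (f : PowerSeries ℝ) (m : ℕ) :
    (PowerSeries.coeff (m + 1)) ((1 - PowerSeries.X) * f)
      = PowerSeries.coeff (m + 1) f - PowerSeries.coeff m f := by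
  rw [sub_mul, one_mul, map_sub, PowerSeries.coeff_succ_X_mul]

/-- Step identity for `k = 0`. -/
lemma step_zero (n : ℕ) :
    (1 - PowerSeries.X) * PowerSeries.mk (aa (n + 1) 0)
      = ∑ i ∈ Finset.range (n + 2), PowerSeries.mk (aa n i) := by
  ext m
  rw [map_sum]
  simp only [PowerSeries.coeff_mk]
  cases m with
  | zero =>
      rw [coeff_one_sub_X_mul_zero, PowerSeries.coeff_mk, sum_aa_full_zero]
      unfold aa bb
      norm_num
  | succ m =>
      rw [coeff_one_sub_X_mul_succ, PowerSeries.coeff_mk, PowerSeries.coeff_mk,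
        sum_aa_full_pos]
      unfold aa bb
      simp only [if_pos rfl, Nat.sub_zero, Nat.sub_self, pow_zero]
      push_cast
      ring

/-- Step identity for the top `k = n+2`. -/
lemma step_top (n : ℕ) :
    (1 - PowerSeries.X) * PowerSeries.mk (aa (n + 1) (n + 2))
      = PowerSeries.X * ∑ i ∈ Finset.range (n + 2), PowerSeries.mk (aa n i) := by
  ext m
  cases m with
  | zero =>
      rw [coeff_one_sub_X_mul_zero, PowerSeries.coeff_zero_X_mul, PowerSeries.coeff_mk,
        aa_at_zero (n + 1) (n + 2) (by omega)]
  | succ m =>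
      rw [coeff_one_sub_X_mul_succ, PowerSeries.coeff_succ_X_mul, map_sum]
      simp only [PowerSeries.coeff_mk]
      rw [aa_of_top (n + 1), aa_of_top (n + 1)]
      cases m with
      | zero =>
          rw [sum_aa_full_zero]
          rw [if_neg (Nat.succ_ne_zero 0), if_pos rfl, sub_zero]
          unfold bb
          norm_num
      | succ m =>
          rw [sum_aa_full_pos]
          rw [if_neg (Nat.succ_ne_zero (m + 1)), if_neg (Nat.succ_ne_zero m)]
          have h1 : bb (n + 1) 0 (m + 1) = bb (n + 1) (n + 1) (m + 1 + 1) := by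
            unfold bb
            simp only [Nat.sub_self, pow_zero, Nat.sub_zero]
            push_cast
            ring
          rw [h1]

/-- coefficient of `2 * f` -/
lemma coeff_two_mul (f : PowerSeries ℝ) (m : ℕ) :
    (PowerSeries.coeff m) (2 * f) = 2 * PowerSeries.coeff m f := by
  rw [two_mul, map_add, two_mul]

/-- Step identity for middle `k = j+1`, `j ≤ n`. -/
lemma step_mid (n j : ℕ) (hj : j ≤ n) :
    (1 - PowerSeries.X) * PowerSeries.mk (aa (n + 1) (j + 1))
      = 2 * PowerSeries.X * (∑ i ∈ Finset.range (j + 1), PowerSeries.mk (aa n i))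
        + 2 * ∑ i ∈ Finset.Icc (j + 1) (n + 1), PowerSeries.mk (aa n i) := by
  have hIcc : ∀ m : ℕ, ∑ i ∈ Finset.Icc (j + 1) (n + 1), aa n i m
      = ∑ i ∈ Finset.range (n + 2), aa n i m - ∑ i ∈ Finset.range (j + 1), aa n i m := by
    intro m
    have h := Finset.sum_Ico_consecutive (fun i => aa n i m)
      (Nat.zero_le (j + 1)) (by omega : j + 1 ≤ n + 2)
    have e1 : Finset.Icc (j + 1) (n + 1) = Finset.Ico (j + 1) (n + 2) := by
      exact (Finset.Ico_add_one_right_eq_Icc ..).symm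
    rw [e1, Finset.range_eq_Ico, Finset.range_eq_Ico]
    linarith [h]
  ext m
  rw [map_add, mul_assoc 2 PowerSeries.X, coeff_two_mul, coeff_two_mul]
  cases m with
  | zero =>
      rw [coeff_one_sub_X_mul_zero, PowerSeries.coeff_mk,
        aa_at_zero (n + 1) (j + 1) (by omega), PowerSeries.coeff_zero_X_mul, map_sum]
      simp only [PowerSeries.coeff_mk]
      rw [Finset.sum_eq_zero (fun i hi => aa_at_zero n i (by
        simp only [Finset.mem_Icc] at hi; omega))]
      ring
  | succ m =>
      rw [coeff_one_sub_X_mul_succ, PowerSeries.coeff_succ_X_mul, map_sum, map_sum]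
      simp only [PowerSeries.coeff_mk]
      rw [hIcc (m + 1), sum_aa_full_pos, sum_aa_range' n j m hj, sum_aa_range' n j (m + 1) hj,
        aa_of_mid (n + 1) (j + 1) (m + 1) (by omega) (by omega),
        aa_of_mid (n + 1) (j + 1) m (by omega) (by omega)]
      simp only [Nat.add_sub_cancel]
      obtain ⟨e, rfl⟩ : ∃ e, n = j + e := ⟨n - j, by omega⟩
      unfold bb
      simp only [show j + e + 1 - j = e + 1 from by omega,
        show j + e + 1 - (j + 1) = e from by omega,
        show j + e - j = e from by omega,
        show j + e + 1 - (j + e + 1) = 0 from by omega,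
        Nat.sub_zero, pow_zero, one_mul]
      push_cast
      ring

lemma pB_coe (n k : ℕ) :
    ((pB n k : Polynomial ℝ) : PowerSeries ℝ)
      = (1 - PowerSeries.X) ^ (n + 1) * PowerSeries.mk (aa n k) := by
  have coe2 : ((2 : Polynomial ℝ) : PowerSeries ℝ) = 2 := by
    rw [show (2 : Polynomial ℝ) = 1 + 1 by norm_num, Polynomial.coe_add, Polynomial.coe_one]
    norm_num
  induction n generalizing k with
  | zero =>
      match k with
      | 0 =>
          rw [pB, Polynomial.coe_one, pow_one]
          ext m
          cases m with
          | zero =>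
              rw [coeff_one_sub_X_mul_zero, PowerSeries.coeff_mk]
              simp [aa, bb]
          | succ m =>
              rw [coeff_one_sub_X_mul_succ, PowerSeries.coeff_mk, PowerSeries.coeff_mk]
              simp [aa, bb, PowerSeries.coeff_one]
      | 1 =>
          rw [pB, Polynomial.coe_X, pow_one]
          ext m
          cases m with
          | zero =>
              rw [coeff_one_sub_X_mul_zero, PowerSeries.coeff_mk]
              simp [aa, bb, PowerSeries.coeff_X]
          | succ m =>
              rw [coeff_one_sub_X_mul_succ, PowerSeries.coeff_mk, PowerSeries.coeff_mk]
              have h1 : aa 0 1 (m + 1) = 1 := by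
                unfold aa bb
                norm_num
              rw [h1]
              cases m with
              | zero =>
                  have h0 : aa 0 1 0 = 0 := aa_at_zero 0 1 le_rfl
                  rw [h0, PowerSeries.coeff_X]
                  norm_num
              | succ m =>
                  have h0 : aa 0 1 (m + 1) = 1 := by
                    unfold aa bb
                    norm_num
                  rw [h0, PowerSeries.coeff_X]
                  norm_num
      | (k + 2) =>
          rw [pB, Polynomial.coe_zero]
          have hmk : PowerSeries.mk (aa 0 (k + 2)) = 0 := by
            ext m
            rw [PowerSeries.coeff_mk, aa_of_big 0 (k + 2) m (by omega)]
            simp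
          rw [hmk, mul_zero]
  | succ n ih =>
      match k with
      | 0 =>
          rw [pB]
          have hcoe : ((∑ i ∈ Finset.range (n + 2), pB n i : Polynomial ℝ) : PowerSeries ℝ)
              = ∑ i ∈ Finset.range (n + 2), ((pB n i : Polynomial ℝ) : PowerSeries ℝ) := by
            simp only [← Polynomial.coeToPowerSeries.ringHom_apply, map_sum]
          rw [hcoe, Finset.sum_congr rfl (fun i _ => ih i), ← Finset.mul_sum,
            ← step_zero, ← mul_assoc, ← pow_succ]
      | (k + 1) =>
          rw [pB]
          by_cases h : k + 1 ≤ n + 1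
          · rw [if_pos h]
            rw [Polynomial.coe_add, Polynomial.coe_mul, Polynomial.coe_mul, Polynomial.coe_mul,
              Polynomial.coe_X, coe2]
            have hcoe1 : ((∑ i ∈ Finset.range (k + 1), pB n i : Polynomial ℝ) : PowerSeries ℝ)
                = ∑ i ∈ Finset.range (k + 1), ((pB n i : Polynomial ℝ) : PowerSeries ℝ) := by
              simp only [← Polynomial.coeToPowerSeries.ringHom_apply, map_sum]
            have hcoe2 : ((∑ i ∈ Finset.Icc (k + 1) (n + 1), pB n i : Polynomial ℝ) :
                  PowerSeries ℝ)
                = ∑ i ∈ Finset.Icc (k + 1) (n + 1), ((pB n i : Polynomial ℝ) : PowerSeries ℝ) := by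
              simp only [← Polynomial.coeToPowerSeries.ringHom_apply, map_sum]
            rw [hcoe1, hcoe2,
              Finset.sum_congr rfl (fun i _ => ih i), Finset.sum_congr rfl (fun i _ => ih i),
              ← Finset.mul_sum, ← Finset.mul_sum]
            have := step_mid n k (by omega)
            calc 2 * PowerSeries.X *
                  ((1 - PowerSeries.X) ^ (n + 1) * ∑ i ∈ Finset.range (k + 1),
                    PowerSeries.mk (aa n i)) +
                  2 * ((1 - PowerSeries.X) ^ (n + 1) * ∑ i ∈ Finset.Icc (k + 1) (n + 1),
                    PowerSeries.mk (aa n i))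
                = (1 - PowerSeries.X) ^ (n + 1) *
                    (2 * PowerSeries.X * (∑ i ∈ Finset.range (k + 1), PowerSeries.mk (aa n i)) +
                      2 * ∑ i ∈ Finset.Icc (k + 1) (n + 1), PowerSeries.mk (aa n i)) := by ring
              _ = (1 - PowerSeries.X) ^ (n + 1) *
                    ((1 - PowerSeries.X) * PowerSeries.mk (aa (n + 1) (k + 1))) := by
                  rw [this]
              _ = (1 - PowerSeries.X) ^ (n + 1 + 1) * PowerSeries.mk (aa (n + 1) (k + 1)) := by
                  rw [← mul_assoc, ← pow_succ]
          · by_cases h2 : k + 1 = n + 2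
            · rw [if_neg h, if_pos h2, h2]
              rw [Polynomial.coe_mul, Polynomial.coe_X]
              have hcoe : ((∑ i ∈ Finset.range (n + 2), pB n i : Polynomial ℝ) : PowerSeries ℝ)
                  = ∑ i ∈ Finset.range (n + 2), ((pB n i : Polynomial ℝ) : PowerSeries ℝ) := by
                simp only [← Polynomial.coeToPowerSeries.ringHom_apply, map_sum]
              rw [hcoe, Finset.sum_congr rfl (fun i _ => ih i), ← Finset.mul_sum]
              calc PowerSeries.X * ((1 - PowerSeries.X) ^ (n + 1) *
                    ∑ i ∈ Finset.range (n + 2), PowerSeries.mk (aa n i))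
                  = (1 - PowerSeries.X) ^ (n + 1) *
                      (PowerSeries.X * ∑ i ∈ Finset.range (n + 2), PowerSeries.mk (aa n i)) := by
                    ring
                _ = (1 - PowerSeries.X) ^ (n + 1) *
                      ((1 - PowerSeries.X) * PowerSeries.mk (aa (n + 1) (n + 2))) := by
                    rw [step_top]
                _ = (1 - PowerSeries.X) ^ (n + 1 + 1) * PowerSeries.mk (aa (n + 1) (n + 2)) := by
                    rw [← mul_assoc, ← pow_succ]
            · rw [if_neg h, if_neg h2, Polynomial.coe_zero]
              have hmk : PowerSeries.mk (aa (n + 1) (k + 1)) = 0 := by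
                ext m
                rw [PowerSeries.coeff_mk, aa_of_big (n + 1) (k + 1) m (by omega)]
                simp
              rw [hmk, mul_zero]

/-- `p^B_{n,0}(x) = B_n(x)`, i.e. `p^B_{n,0}(x) = (1-x)^{n+1} ⬝ ∑_{m ≥ 0} (2m+1)^n x^m`
in `ℝ⟦x⟧` (the latter identity is what defines the type `B` Eulerian polynomial `B_n`). -/
theorem pB_zero_eq_eulerianB (n : ℕ) :
    (pB n 0 : PowerSeries ℝ) =
      (1 - PowerSeries.X) ^ (n + 1) *
        PowerSeries.mk (fun m => ((2 * m + 1 : ℝ)) ^ n) := by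
  rw [pB_coe]
  congr 1
  ext m
  unfold aa bb
  simp
end

section
/- For every natural number n, Σ_{k=0}^{n+1} p^B_{n,k}(x) = B_{n+1}(x). -/
open Polynomial PowerSeries

namespace PBaux

noncomputable def aB (n k m : ℕ) : ℝ :=
  if k = 0 then (2*(m:ℝ)+1)^n
  else if k ≤ n then 4*(m:ℝ)*(2*(m:ℝ)+1)^(n-k)*(2*(m:ℝ)-1)^(k-1)
  else if k = n+1 then (if m = 0 then 0 else (2*(m:ℝ)-1)^n)
  else 0

noncomputable def AB (n k m : ℕ) : ℝ :=
  if k = 0 then 0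
  else if k ≤ n+1 then (2*(m:ℝ)+1)^(n+1) - 2*(m:ℝ)*(2*(m:ℝ)+1)^(n+1-k)*(2*(m:ℝ)-1)^(k-1)
  else if m = 0 then 1 else (2*(m:ℝ)+1)^(n+1) - (2*(m:ℝ)-1)^(n+1)

lemma aB_zero (n : ℕ) (m : ℕ) : aB n 0 m = (2*(m:ℝ)+1)^n := by
  unfold aB; rw [if_pos rfl]

lemma aB_mid (n k j t : ℕ) (hk : k = j + 1) (ht : n = k + t) (m : ℕ) :
    aB n k m = 4*(m:ℝ)*(2*(m:ℝ)+1)^t*(2*(m:ℝ)-1)^j := by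
  subst hk
  unfold aB
  rw [if_neg (show ¬(j+1 = 0) by omega), if_pos (show j+1 ≤ n by omega),
    show n - (j+1) = t from by omega, show j + 1 - 1 = j from by omega]

lemma aB_top (n k : ℕ) (hk : k = n + 1) (m : ℕ) :
    aB n k m = if m = 0 then 0 else (2*(m:ℝ)-1)^n := by
  subst hk
  unfold aB
  rw [if_neg (show ¬(n+1 = 0) by omega), if_neg (show ¬(n+1 ≤ n) by omega), if_pos rfl]

lemma aB_high (n k : ℕ) (hk : n + 2 ≤ k) (m : ℕ) : aB n k m = 0 := by
  unfold aB
  rw [if_neg (show ¬(k = 0) by omega), if_neg (show ¬(k ≤ n) by omega),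
    if_neg (show ¬(k = n+1) by omega)]

lemma AB_zero (n : ℕ) (m : ℕ) : AB n 0 m = 0 := by
  unfold AB; rw [if_pos rfl]

lemma AB_mid (n k j t : ℕ) (hk : k = j + 1) (ht : n + 1 = k + t) (m : ℕ) :
    AB n k m = (2*(m:ℝ)+1)^(n+1) - 2*(m:ℝ)*(2*(m:ℝ)+1)^t*(2*(m:ℝ)-1)^j := by
  subst hk
  unfold AB
  rw [if_neg (show ¬(j+1 = 0) by omega), if_pos (show j+1 ≤ n+1 by omega),
    show n + 1 - (j+1) = t from by omega, show j + 1 - 1 = j from by omega]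

lemma AB_top (n k : ℕ) (hk : k = n + 2) (m : ℕ) :
    AB n k m = if m = 0 then 1 else (2*(m:ℝ)+1)^(n+1) - (2*(m:ℝ)-1)^(n+1) := by
  subst hk
  unfold AB
  rw [if_neg (show ¬(n+2 = 0) by omega), if_neg (show ¬(n+2 ≤ n+1) by omega)]

lemma AB_succ (n k m : ℕ) (hk : k ≤ n + 1) : AB n (k+1) m = AB n k m + aB n k m := by
  rcases Nat.lt_or_ge k 1 with h0 | h1
  · obtain rfl : k = 0 := by omega
    rw [AB_mid n 1 0 n (by omega) (by omega), AB_zero, aB_zero]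
    push_cast; ring
  · rcases Nat.lt_or_ge k (n+1) with hmid | htop
    · rw [AB_mid n (k+1) k (n-k) (by omega) (by omega),
        AB_mid n k (k-1) (n-k+1) (by omega) (by omega),
        aB_mid n k (k-1) (n-k) (by omega) (by omega)]
      obtain ⟨j, rfl⟩ : ∃ j, k = j + 1 := ⟨k - 1, by omega⟩
      rw [show j + 1 - 1 = j from by omega]
      push_cast; ring
    · obtain rfl : k = n + 1 := by omega
      rw [AB_top n (n+2) rfl, AB_mid n (n+1) n 0 rfl (by omega), aB_top n (n+1) rfl]
      cases m with
      | zero => norm_num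
      | succ s =>
        rw [if_neg (Nat.succ_ne_zero s), if_neg (Nat.succ_ne_zero s)]
        push_cast; ring

lemma sum_aB (n : ℕ) : ∀ k, k ≤ n + 2 → ∀ m, ∑ i ∈ Finset.range k, aB n i m = AB n k m := by
  intro k
  induction k with
  | zero => intro _ m; rw [Finset.sum_range_zero, AB_zero]
  | succ k ih =>
    intro hk m
    rw [Finset.sum_range_succ, ih (by omega) m, AB_succ n k m (by omega)]

lemma mk_sum (n k : ℕ) (hk : k ≤ n + 2) :
    ∑ i ∈ Finset.range k, PowerSeries.mk (aB n i) = PowerSeries.mk (AB n k) := by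
  ext m
  rw [map_sum]
  simpa using sum_aB n k hk m

lemma coe_sum' (s : Finset ℕ) (p : ℕ → ℝ[X]) :
    ((∑ i ∈ s, p i : ℝ[X]) : ℝ⟦X⟧) = ∑ i ∈ s, ((p i : ℝ[X]) : ℝ⟦X⟧) := by
  ext m; simp [Polynomial.finset_sum_coeff]

lemma coe_two : ((2 : ℝ[X]) : ℝ⟦X⟧) = 2 := by
  have : (2 : ℝ[X]) = (1 : ℝ[X]) + 1 := by norm_num
  rw [this, Polynomial.coe_add, Polynomial.coe_one]; norm_num

lemma coeff_one_sub_X_mul (f : ℝ⟦X⟧) (m : ℕ) :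
    PowerSeries.coeff m ((1 - PowerSeries.X) * f) =
      PowerSeries.coeff m f - if m = 0 then 0 else PowerSeries.coeff (m-1) f := by
  rw [sub_mul, one_mul]
  cases m with
  | zero => simp
  | succ s => simp [PowerSeries.coeff_succ_X_mul]

lemma coeff_X_mul' (f : ℝ⟦X⟧) (m : ℕ) :
    PowerSeries.coeff m (PowerSeries.X * f) =
      if m = 0 then 0 else PowerSeries.coeff (m-1) f := by
  cases m with
  | zero => simp
  | succ s => simp [PowerSeries.coeff_succ_X_mul]

lemma step0 (n : ℕ) :
    PowerSeries.mk (AB n (n+2)) = (1 - PowerSeries.X) * PowerSeries.mk (aB (n+1) 0) := by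
  ext m
  rw [coeff_one_sub_X_mul]
  simp only [PowerSeries.coeff_mk, AB_top n (n+2) rfl, aB_zero]
  cases m with
  | zero => norm_num
  | succ s =>
    rw [if_neg (Nat.succ_ne_zero s), if_neg (Nat.succ_ne_zero s),
      show s + 1 - 1 = s from by omega]
    push_cast; ring

lemma stepMid (n k : ℕ) (h1 : 1 ≤ k) (h2 : k ≤ n + 1) :
    2 * PowerSeries.X * PowerSeries.mk (AB n k) +
      2 * (PowerSeries.mk (AB n (n+2)) - PowerSeries.mk (AB n k)) =
    (1 - PowerSeries.X) * PowerSeries.mk (aB (n+1) k) := by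
  ext m
  rw [coeff_one_sub_X_mul, mul_assoc]
  simp only [two_mul, map_add, map_sub, coeff_X_mul', PowerSeries.coeff_mk,
    AB_mid n k (k-1) (n+1-k) (by omega) (by omega),
    AB_top n (n+2) rfl,
    aB_mid (n+1) k (k-1) (n+1-k) (by omega) (by omega)]
  obtain ⟨j, rfl⟩ : ∃ j, k = j + 1 := ⟨k - 1, by omega⟩
  rw [show j + 1 - 1 = j from by omega]
  cases m with
  | zero => norm_num
  | succ s =>
    simp only [if_neg (Nat.succ_ne_zero s), show s + 1 - 1 = s from by omega]
    push_cast; ring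

lemma stepTop (n : ℕ) :
    PowerSeries.X * PowerSeries.mk (AB n (n+2)) =
      (1 - PowerSeries.X) * PowerSeries.mk (aB (n+1) (n+2)) := by
  ext m
  rw [coeff_X_mul', coeff_one_sub_X_mul]
  simp only [PowerSeries.coeff_mk, AB_top n (n+2) rfl, aB_top (n+1) (n+2) rfl]
  cases m with
  | zero => norm_num
  | succ s =>
    simp only [if_neg (Nat.succ_ne_zero s), show s + 1 - 1 = s from by omega]
    cases s with
    | zero => norm_num
    | succ r =>
      simp only [if_neg (Nat.succ_ne_zero r), show r + 1 - 1 = r from by omega]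
      push_cast; ring

lemma key (n : ℕ) : ∀ k, ((pB n k : ℝ[X]) : ℝ⟦X⟧) =
    (1 - PowerSeries.X) ^ (n + 1) * PowerSeries.mk (aB n k) := by
  induction n with
  | zero =>
    intro k
    match k with
    | 0 =>
      rw [pB, Polynomial.coe_one]
      ext m
      rw [pow_one, coeff_one_sub_X_mul]
      simp only [PowerSeries.coeff_mk, aB_zero]
      cases m with
      | zero => simp
      | succ s => simp [PowerSeries.coeff_one]
    | 1 =>
      rw [pB, Polynomial.coe_X]
      ext m
      rw [pow_one, coeff_one_sub_X_mul]
      simp only [PowerSeries.coeff_mk, aB_top 0 1 rfl]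
      cases m with
      | zero => simp
      | succ s =>
        simp only [if_neg (Nat.succ_ne_zero s), show s + 1 - 1 = s from by omega]
        cases s with
        | zero => simp
        | succ r =>
          simp only [if_neg (Nat.succ_ne_zero r)]
          rw [PowerSeries.coeff_X]
          norm_num
    | (k+2) =>
      rw [pB]
      have : PowerSeries.mk (aB 0 (k+2)) = 0 := by
        ext m; simp [aB_high 0 (k+2) (by omega) m]
      rw [this, mul_zero, Polynomial.coe_zero]
  | succ n ih =>
    have hS : ∀ j, j ≤ n + 2 → ((∑ i ∈ Finset.range j, pB n i : ℝ[X]) : ℝ⟦X⟧) =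
        (1 - PowerSeries.X) ^ (n + 1) * PowerSeries.mk (AB n j) := by
      intro j hj
      rw [coe_sum', Finset.sum_congr rfl fun i _ => ih i, ← Finset.mul_sum, mk_sum n j hj]
    intro k
    match k with
    | 0 =>
      rw [pB, hS (n+2) le_rfl, step0 n]
      ring
    | (k+1) =>
      by_cases h : k + 1 ≤ n + 1
      · rw [pB, if_pos h]
        have hI : ∑ i ∈ Finset.Icc (k+1) (n+1), pB n i =
            ∑ i ∈ Finset.range (n+2), pB n i - ∑ i ∈ Finset.range (k+1), pB n i := by
          have hsum := Finset.sum_Ico_consecutive (pB n) (Nat.zero_le (k+1))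
            (show k + 1 ≤ n + 2 by omega)
          rw [← Finset.range_eq_Ico, ← Finset.range_eq_Ico] at hsum
          have hIcc : Finset.Ico (k+1) (n+2) = Finset.Icc (k+1) (n+1) := by
            rw [show n+2 = n+1+1 from rfl, Finset.Ico_add_one_right_eq_Icc]
          rw [hIcc] at hsum
          linear_combination hsum
        rw [hI]
        have hc : ((2 * Polynomial.X * (∑ i ∈ Finset.range (k+1), pB n i) +
              2 * (∑ i ∈ Finset.range (n+2), pB n i - ∑ i ∈ Finset.range (k+1), pB n i)
              : ℝ[X]) : ℝ⟦X⟧)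
            = 2 * PowerSeries.X * ((∑ i ∈ Finset.range (k+1), pB n i : ℝ[X]) : ℝ⟦X⟧) +
              2 * (((∑ i ∈ Finset.range (n+2), pB n i : ℝ[X]) : ℝ⟦X⟧) -
                ((∑ i ∈ Finset.range (k+1), pB n i : ℝ[X]) : ℝ⟦X⟧)) := by
          push_cast [coe_two]
          ring
        rw [hc, hS (k+1) (by omega), hS (n+2) le_rfl]
        calc 2 * PowerSeries.X * ((1 - PowerSeries.X) ^ (n + 1) * PowerSeries.mk (AB n (k+1))) +
              2 * ((1 - PowerSeries.X) ^ (n + 1) * PowerSeries.mk (AB n (n+2)) -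
                (1 - PowerSeries.X) ^ (n + 1) * PowerSeries.mk (AB n (k+1)))
            = (1 - PowerSeries.X) ^ (n + 1) *
                (2 * PowerSeries.X * PowerSeries.mk (AB n (k+1)) +
                  2 * (PowerSeries.mk (AB n (n+2)) - PowerSeries.mk (AB n (k+1)))) := by ring
          _ = (1 - PowerSeries.X) ^ (n + 1) *
                ((1 - PowerSeries.X) * PowerSeries.mk (aB (n+1) (k+1))) := by
              rw [stepMid n (k+1) (by omega) h]
          _ = (1 - PowerSeries.X) ^ (n + 1 + 1) * PowerSeries.mk (aB (n+1) (k+1)) := by ring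
      · by_cases h2 : k + 1 = n + 2
        · rw [pB, if_neg h, if_pos h2]
          rw [Polynomial.coe_mul, Polynomial.coe_X, hS (n+2) le_rfl, h2]
          calc PowerSeries.X * ((1 - PowerSeries.X) ^ (n + 1) * PowerSeries.mk (AB n (n+2)))
              = (1 - PowerSeries.X) ^ (n + 1) *
                (PowerSeries.X * PowerSeries.mk (AB n (n+2))) := by ring
            _ = (1 - PowerSeries.X) ^ (n + 1) *
                ((1 - PowerSeries.X) * PowerSeries.mk (aB (n+1) (n+2))) := by rw [stepTop n]
            _ = (1 - PowerSeries.X) ^ (n + 1 + 1) * PowerSeries.mk (aB (n+1) (n+2)) := by ring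
        · rw [pB, if_neg h, if_neg h2]
          have : PowerSeries.mk (aB (n+1) (k+1)) = 0 := by
            ext m; simp [aB_high (n+1) (k+1) (by omega) m]
          rw [this, mul_zero, Polynomial.coe_zero]

end PBaux

open PBaux in
/-- `∑_{k=0}^{n+1} p^B_{n,k}(x) = B_{n+1}(x)`, where `B_{n+1}` is the type `B` Eulerian
polynomial, determined by `∑_{m ≥ 0} (2m+1)^{n+1} x^m = B_{n+1}(x)/(1-x)^{n+2}` in `ℝ⟦x⟧`. -/
theorem pB_sum_eq_eulerianB (n : ℕ) (B : Polynomial ℝ)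
    (hB : (B : PowerSeries ℝ) =
      (1 - PowerSeries.X) ^ (n + 2) * PowerSeries.mk (fun m => ((2 * m + 1 : ℝ)) ^ (n + 1))) :
    ∑ k ∈ Finset.range (n + 2), pB n k = B := by
  have h1 : ((∑ k ∈ Finset.range (n+2), pB n k : ℝ[X]) : ℝ⟦X⟧) =
      (1 - PowerSeries.X) ^ (n + 1) * PowerSeries.mk (AB n (n+2)) := by
    rw [coe_sum', Finset.sum_congr rfl fun i _ => key n i, ← Finset.mul_sum,
      mk_sum n (n+2) le_rfl]
  have h2 : PowerSeries.mk (AB n (n+2)) =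
      (1 - PowerSeries.X) * PowerSeries.mk (fun m => ((2 * m + 1 : ℝ)) ^ (n + 1)) := by
    ext m
    rw [coeff_one_sub_X_mul]
    simp only [PowerSeries.coeff_mk, AB_top n (n+2) rfl]
    cases m with
    | zero => norm_num
    | succ s =>
      simp only [if_neg (Nat.succ_ne_zero s), show s + 1 - 1 = s from by omega]
      push_cast; ring
  rw [← Polynomial.coe_inj, hB, h1, h2]
  ring
end

section
/- For every natural number n and every k ∈ {0,1,…,n+1}, the polynomial p^B_{n,n+1−k}(x) equals the reversal of p^B_{n,k}(x) with respect to degree n+1; that is, p^B_{n,n+1−k}(x) = x^{n+1} p^B_{n,k}(1/x), i.e., for every j ∈ {0,1,…,n+1} the coefficient of x^j in p^B_{n,n+1−k}(x) equals the coefficient of x^{n+1−j} in p^B_{n,k}(x). -/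
open Polynomial PowerSeries

lemma pB_succ_zero (n : ℕ) : pB (n+1) 0 = ∑ i ∈ Finset.range (n+2), pB n i := by rw [pB]

lemma pB_succ_mid (n k : ℕ) (h1 : 1 ≤ k) (h2 : k ≤ n+1) :
    pB (n+1) k = 2*Polynomial.X*(∑ i ∈ Finset.range k, pB n i)
      + 2*∑ i ∈ Finset.Icc k (n+1), pB n i := by
  obtain ⟨m, rfl⟩ : ∃ m, k = m + 1 := ⟨k-1, by omega⟩
  rw [pB, if_pos (by omega)]

lemma pB_succ_top (n : ℕ) : pB (n+1) (n+2) = Polynomial.X * ∑ i ∈ Finset.range (n+2), pB n i := by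
  show pB (n+1) ((n+1)+1) = _
  rw [pB, if_neg (by omega), if_pos rfl]

lemma pB_base0 : pB 0 0 = 1 := by rw [pB]
lemma pB_base1 : pB 0 1 = Polynomial.X := by rw [pB]

lemma pB_big (n k : ℕ) (h : n + 1 < k) : pB n k = 0 := by
  match n, k, h with
  | 0, m+2, _ => rw [pB]
  | n+1, m+1, h => rw [pB, if_neg (by omega), if_neg (by omega)]

lemma pB_coeff_zero (n : ℕ) : ∀ k j, n + 1 < j → (pB n k).coeff j = 0 := by
  induction n with
  | zero =>
    intro k j hj
    match k with
    | 0 => rw [pB_base0]; simp [Polynomial.coeff_one]; omega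
    | 1 => rw [pB_base1]; simp [Polynomial.coeff_X]; omega
    | m+2 => rw [pB_big 0 (m+2) (by omega)]; simp
  | succ n ih =>
    intro k j hj
    match k with
    | 0 =>
      rw [pB_succ_zero, Polynomial.finset_sum_coeff]
      exact Finset.sum_eq_zero fun i _ => ih i j (by omega)
    | m+1 =>
      rcases le_or_gt (m+1) (n+1) with h | h
      · rw [pB_succ_mid n (m+1) (by omega) h]
        obtain ⟨j', rfl⟩ : ∃ j', j = j' + 1 := ⟨j-1, by omega⟩
        rw [Polynomial.coeff_add, mul_assoc,
          Polynomial.coeff_ofNat_mul, Polynomial.coeff_ofNat_mul, Polynomial.coeff_X_mul,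
          Polynomial.finset_sum_coeff, Polynomial.finset_sum_coeff]
        rw [Finset.sum_eq_zero fun i _ => ih i j' (by omega),
          Finset.sum_eq_zero fun i _ => ih i (j'+1) (by omega)]
        ring
      · by_cases h2 : m + 1 = n + 2
        · rw [h2, pB_succ_top]
          obtain ⟨j', rfl⟩ : ∃ j', j = j' + 1 := ⟨j-1, by omega⟩
          rw [Polynomial.coeff_X_mul, Polynomial.finset_sum_coeff]
          exact Finset.sum_eq_zero fun i _ => ih i j' (by omega)
        · rw [pB_big (n+1) (m+1) (by omega)]; simp

noncomputable def aPB (n m j : ℕ) : ℝ := ∑ i ∈ Finset.range m, (pB n i).coeff j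

lemma aPB_zero (n m j : ℕ) (hj : n + 1 < j) : aPB n m j = 0 :=
  Finset.sum_eq_zero fun i _ => pB_coeff_zero n i j hj

lemma pB_L (n : ℕ)
    (IH : ∀ k ≤ n+1, ∀ j ≤ n+1, (pB n (n+1-k)).coeff j = (pB n k).coeff (n+1-j))
    (m : ℕ) (hm : m ≤ n+2) (j' : ℕ) (hj' : j' ≤ n+1) :
    aPB n m j' + aPB n (n+2-m) (n+1-j') = aPB n (n+2) (n+1-j') := by
  have step1 : aPB n m j' = ∑ i ∈ Finset.range m, (pB n (n+1-i)).coeff (n+1-j') := by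
    apply Finset.sum_congr rfl
    intro i hi
    have hi' : i < m := Finset.mem_range.mp hi
    have h := IH (n+1-i) (by omega) j' hj'
    rw [show n+1-(n+1-i) = i by omega] at h
    exact h
  have step2 : ∑ i ∈ Finset.range (n+2), (pB n (n+1-i)).coeff (n+1-j')
      = aPB n (n+2) (n+1-j') := by
    rw [aPB, ← Finset.sum_range_reflect (fun i => (pB n i).coeff (n+1-j')) (n+2)]
    exact Finset.sum_congr rfl fun i hi => by rw [show n+2-1-i = n+1-i by omega]
  have step3 : ∑ i ∈ Finset.range (n+2), (pB n (n+1-i)).coeff (n+1-j')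
      = (∑ i ∈ Finset.range m, (pB n (n+1-i)).coeff (n+1-j'))
        + ∑ i ∈ Finset.Ico m (n+2), (pB n (n+1-i)).coeff (n+1-j') := by
    rw [Finset.range_eq_Ico, ← Finset.sum_Ico_consecutive _ (Nat.zero_le m) hm,
      ← Finset.range_eq_Ico]
  have step4 : ∑ i ∈ Finset.Ico m (n+2), (pB n (n+1-i)).coeff (n+1-j')
      = aPB n (n+2-m) (n+1-j') := by
    rw [Finset.sum_Ico_eq_sum_range, aPB,
      ← Finset.sum_range_reflect (fun i => (pB n i).coeff (n+1-j')) (n+2-m)]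
    apply Finset.sum_congr rfl
    intro i hi
    have : i < n+2-m := Finset.mem_range.mp hi
    congr 2
    omega
  rw [step1, ← step4, ← step2, step3]

lemma pB_coeff_mid_zero (n m : ℕ) (h1 : 1 ≤ m) (h2 : m ≤ n+1) :
    (pB (n+1) m).coeff 0 = 2*(aPB n (n+2) 0 - aPB n m 0) := by
  rw [pB_succ_mid n m h1 h2, Polynomial.coeff_add, mul_assoc,
    Polynomial.coeff_ofNat_mul, Polynomial.coeff_ofNat_mul,
    Polynomial.mul_coeff_zero, Polynomial.coeff_X_zero, Polynomial.finset_sum_coeff,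
    ← Finset.Ico_add_one_right_eq_Icc, Finset.sum_Ico_eq_sub _ (show m ≤ n+1+1 by omega)]
  simp only [Polynomial.coeff_sub, Polynomial.finset_sum_coeff, aPB,
    show 2+n = n+2 by omega, show n+1+1 = n+2 by omega]
  try ring

lemma pB_coeff_mid_succ (n m : ℕ) (h1 : 1 ≤ m) (h2 : m ≤ n+1) (j' : ℕ) :
    (pB (n+1) m).coeff (j'+1)
      = 2 * aPB n m j' + 2*(aPB n (n+2) (j'+1) - aPB n m (j'+1)) := by
  rw [pB_succ_mid n m h1 h2, Polynomial.coeff_add, mul_assoc,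
    Polynomial.coeff_ofNat_mul, Polynomial.coeff_ofNat_mul,
    Polynomial.coeff_X_mul, Polynomial.finset_sum_coeff, Polynomial.finset_sum_coeff,
    ← Finset.Ico_add_one_right_eq_Icc, Finset.sum_Ico_eq_sub _ (show m ≤ n+1+1 by omega)]
  simp only [Polynomial.coeff_sub, Polynomial.finset_sum_coeff, aPB,
    show 2+n = n+2 by omega, show n+1+1 = n+2 by omega]
  try ring

lemma pB_key : ∀ n : ℕ, ∀ k ≤ n+1, ∀ j ≤ n+1,
    (pB n (n+1-k)).coeff j = (pB n k).coeff (n+1-j) := by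
  intro n
  induction n with
  | zero =>
    intro k hk j hj
    interval_cases k <;> interval_cases j <;>
      simp [pB_base0, pB_base1, Polynomial.coeff_one, Polynomial.coeff_X]
  | succ n IH =>
    intro k hk j hj
    have Tsym : ∀ j' ≤ n+1, aPB n (n+2) j' = aPB n (n+2) (n+1-j') := by
      intro j' hj'
      have h := pB_L n IH (n+2) le_rfl j' hj'
      simpa [aPB] using h
    have coeff0 : ∀ jj, (pB (n+1) 0).coeff jj = aPB n (n+2) jj := by
      intro jj
      rw [pB_succ_zero, Polynomial.finset_sum_coeff, aPB]
    rcases Nat.eq_zero_or_pos k with rfl | hk1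
    · -- k = 0 : LHS index n+2
      rw [show n+1+1-0 = n+2 from rfl, pB_succ_top, coeff0]
      rcases Nat.eq_zero_or_pos j with rfl | hj1
      · rw [show n+1+1-0 = n+2 from rfl, Polynomial.mul_coeff_zero, Polynomial.coeff_X_zero,
          aPB_zero n (n+2) (n+2) (by omega)]
        ring
      · obtain ⟨j', rfl⟩ : ∃ j', j = j' + 1 := ⟨j-1, by omega⟩
        rw [Polynomial.coeff_X_mul, Polynomial.finset_sum_coeff,
          show n+1+1-(j'+1) = n+1-j' by omega, ← Tsym j' (by omega)]
        rfl
    · rcases eq_or_lt_of_le hk with rfl | hk2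
      · -- k = n+2
        rw [show n+1+1-(n+1+1) = 0 from by omega, coeff0]
        rcases eq_or_lt_of_le hj with rfl | hj2
        · rw [show n+1+1-(n+1+1) = 0 from by omega, pB_succ_top,
            Polynomial.mul_coeff_zero, Polynomial.coeff_X_zero,
            aPB_zero n (n+2) (n+2) (by omega)]
          ring
        · rw [pB_succ_top, show n+1+1-j = (n+1-j)+1 by omega, Polynomial.coeff_X_mul,
            Polynomial.finset_sum_coeff, Tsym j (by omega)]
          rfl
      · -- 1 ≤ k ≤ n+1
        have hkn : k ≤ n+1 := by omega
        set m := n+2-k with hm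
        have hm1 : 1 ≤ m := by omega
        have hmn : m ≤ n+1 := by omega
        have hmk : n+2-m = k := by omega
        rcases Nat.eq_zero_or_pos j with rfl | hj1
        · rw [pB_coeff_mid_zero n m hm1 hmn,
            show n+1+1-0 = (n+1)+1 from rfl,
            pB_coeff_mid_succ n k hk1 hkn (n+1),
            aPB_zero n (n+2) (n+2) (by omega), aPB_zero n k (n+2) (by omega)]
          have h := pB_L n IH k (by omega) (n+1) le_rfl
          rw [show n+1-(n+1) = 0 by omega, hm.symm] at h
          linarith
        · rcases eq_or_lt_of_le hj with rfl | hj2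
          · -- j = n+2
            rw [show n+1+1-(n+1+1) = 0 by omega,
              pB_coeff_mid_zero n k hk1 hkn,
              show n+1+1 = (n+1)+1 from rfl,
              pB_coeff_mid_succ n m hm1 hmn (n+1),
              aPB_zero n (n+2) (n+2) (by omega), aPB_zero n m (n+2) (by omega)]
            have h := pB_L n IH m (by omega) (n+1) le_rfl
            rw [show n+1-(n+1) = 0 by omega, hmk] at h
            linarith
          · -- 1 ≤ j ≤ n+1
            obtain ⟨j', rfl⟩ : ∃ j', j = j' + 1 := ⟨j-1, by omega⟩
            have hj' : j' ≤ n := by omega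
            rw [pB_coeff_mid_succ n m hm1 hmn j',
              show n+1+1-(j'+1) = (n-j')+1 by omega,
              pB_coeff_mid_succ n k hk1 hkn (n-j')]
            have h1 := pB_L n IH m (by omega) j' (by omega)
            rw [hmk] at h1
            have h2 := pB_L n IH m (by omega) (j'+1) (by omega)
            rw [hmk, show n+1-(j'+1) = n-j' by omega] at h2
            have h3 := Tsym (j'+1) (by omega)
            rw [show n+1-(j'+1) = n-j' by omega] at h3
            have h4 : (n-j')+1 = n+1-j' := by omega
            rw [h4] at *
            linarith

/-- `p^B_{n,n+1-k}(x) = x^{n+1} p^B_{n,k}(1/x)`: for every `j ∈ {0,…,n+1}` the coefficient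
of `x^j` in `p^B_{n,n+1-k}` equals the coefficient of `x^{n+1-j}` in `p^B_{n,k}`. -/
theorem pB_reversal (n k : ℕ) (hk : k ≤ n + 1) (j : ℕ) (hj : j ≤ n + 1) :
    (pB n (n + 1 - k)).coeff j = (pB n k).coeff (n + 1 - j) :=
  pB_key n k hk j hj
end

section
/- For every natural number n and every k ∈ {0,1,…,n+1}, the following recurrence holds: p^B_{n+1,k+1}(x) = 2·p^B_{n+1,0}(x) + 2(x−1)·p^B_{n,0}(x) if k = 0; p^B_{n+1,k+1}(x) = p^B_{n+1,k}(x) + 2(x−1)·p^B_{n,k}(x) if 1 ≤ k ≤ n; and p^B_{n+1,n+2}(x) = (1/2)·p^B_{n+1,n+1}(x) + (x−1)·p^B_{n,n+1}(x) if k = n+1. -/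
open Polynomial PowerSeries

lemma icc_split (f : ℕ → Polynomial ℝ) (a n : ℕ) (h : a ≤ n + 1) :
    ∑ i ∈ Finset.Icc a (n + 1), f i = f a + ∑ i ∈ Finset.Icc (a + 1) (n + 1), f i := by
  rw [← Finset.Ico_add_one_right_eq_Icc, ← Finset.Ico_add_one_right_eq_Icc,
    Finset.sum_eq_sum_Ico_succ_bot (by omega : a < n + 1 + 1)]

lemma range_split (f : ℕ → Polynomial ℝ) (n : ℕ) :
    ∑ i ∈ Finset.range (n + 2), f i = f 0 + ∑ i ∈ Finset.Icc 1 (n + 1), f i := by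
  rw [Finset.range_eq_Ico, Finset.sum_eq_sum_Ico_succ_bot (by omega : 0 < n + 2),
    ← Finset.Ico_add_one_right_eq_Icc]
  rfl

/-- Proposition (d): for `k ∈ {0,1,…,n+1}`,
`p^B_{n+1,k+1} = 2 p^B_{n+1,0} + 2(x-1) p^B_{n,0}` if `k = 0`;
`p^B_{n+1,k+1} = p^B_{n+1,k} + 2(x-1) p^B_{n,k}` if `1 ≤ k ≤ n`; and
`p^B_{n+1,n+2} = (1/2) p^B_{n+1,n+1} + (x-1) p^B_{n,n+1}` if `k = n+1`. -/
theorem pB_recurrence (n k : ℕ) (hk : k ≤ n + 1) :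
    pB (n + 1) (k + 1) =
      if k = 0 then
        2 * pB (n + 1) 0 + 2 * (Polynomial.X - 1) * pB n 0
      else if k ≤ n then
        pB (n + 1) k + 2 * (Polynomial.X - 1) * pB n k
      else
        Polynomial.C (1 / 2 : ℝ) * pB (n + 1) (n + 1) + (Polynomial.X - 1) * pB n (n + 1) := by
  match k, hk with
  | 0, _ =>
    rw [if_pos rfl, pB, pB, if_pos (by omega : 0 + 1 ≤ n + 1), range_split]
    simp only [Finset.range_one, Finset.sum_singleton, zero_add]
    ring
  | k + 1, hk =>
    by_cases h : k + 1 ≤ n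
    · rw [if_neg (by omega), if_pos h, pB, pB, if_pos (by omega), if_pos (by omega),
        icc_split _ (k+1) n (by omega), Finset.sum_range_succ]
      ring
    · have hk' : k = n := by omega
      subst hk'
      rw [if_neg (by omega), if_neg (by omega), pB, pB,
        if_neg (by omega), if_pos rfl, if_pos (le_refl _),
        icc_split _ (k+1) k (le_refl _), show Finset.Icc (k+1+1) (k+1) = ∅ by simp,
        Finset.sum_empty, add_zero, Finset.sum_range_succ]
      have h2 : (Polynomial.C (1/2 : ℝ)) * 2 = 1 := by
        rw [← map_ofNat (Polynomial.C : ℝ →+* Polynomial ℝ) 2, ← map_mul]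
        norm_num
      linear_combination (-1 : Polynomial ℝ) *
        (Polynomial.X * (∑ i ∈ Finset.range (k+1), pB k i) + pB k (k+1)) * h2
end

section
/- Let n be a natural number and let f_0, …, f_n and h_0, …, h_{n+1} be real numbers satisfying the polynomial identity (1+x) · Σ_{k=0}^{n+1} h_k x^k = 1 + Σ_{k=0}^{n} f_k x^{k+1} ((1−x)/2)^{n−k} + h_{n+1} x^{n+2} in ℝ[x]. Then the polynomial identity Σ_{k=0}^{n} f_k (2y−1)^k = Σ_{k=0}^{n} (h_k + h_{k+1}) (2y−1)^k (2y+1)^{n−k} holds in ℝ[y] (equivalently, for all real y). -/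
open Polynomial PowerSeries

private lemma cubical_sum_shift {R : Type*} [CommRing R] (a b : R) (g : ℕ → R) (m n : ℕ)
    (hmn : m ≤ n + 1) :
    ∑ k ∈ Finset.range m, g k * a ^ k * b ^ (n + 1 - k)
      = b * ∑ k ∈ Finset.range m, g k * a ^ k * b ^ (n - k) := by
  rw [Finset.mul_sum]
  refine Finset.sum_congr rfl fun k hk => ?_
  have hk' : k ≤ n := by have := Finset.mem_range.mp hk; omega
  have he : n + 1 - k = (n - k) + 1 := by omega
  rw [he, pow_succ]; ring

private lemma cubical_keyring {R : Type*} [CommRing R] (a b : R) (h : ℕ → R) (n : ℕ) :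
    (b + a) * ∑ k ∈ Finset.range (n + 2), h k * a ^ k * b ^ (n + 1 - k)
      = h 0 * b ^ (n + 2)
        + a * b * (∑ k ∈ Finset.range (n + 1), (h k + h (k + 1)) * a ^ k * b ^ (n - k))
        + h (n + 1) * a ^ (n + 2) := by
  induction n with
  | zero => simp [Finset.sum_range_succ]; ring
  | succ n ih =>
    rw [Finset.sum_range_succ, cubical_sum_shift a b _ (n + 2) (n + 1) (by omega),
      Finset.sum_range_succ (f := fun k => (h k + h (k + 1)) * a ^ k * b ^ (n + 1 - k)),
      cubical_sum_shift a b _ (n + 1) n (by omega)]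
    simp only [Nat.sub_self, pow_zero, mul_one]
    linear_combination b * ih

private lemma cubical_field_step {K : Type*} [Field K] (n : ℕ) (f h : ℕ → K) (a b : K)
    (ha : a ≠ 0) (hb : b ≠ 0) (h2 : (2 : K) ≠ 0) (hba : b - a = 2)
    (h0 : h 0 = 1)
    (E : (1 + a / b) * ∑ k ∈ Finset.range (n + 2), h k * (a / b) ^ k
       = 1 + (∑ k ∈ Finset.range (n + 1), f k * (a / b) ^ (k + 1)
              * ((1 / 2 : K) * (1 - a / b)) ^ (n - k))
         + h (n + 1) * (a / b) ^ (n + 2)) :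
    ∑ k ∈ Finset.range (n + 1), f k * a ^ k
      = ∑ k ∈ Finset.range (n + 1), (h k + h (k + 1)) * a ^ k * b ^ (n - k) := by
  have keyring := cubical_keyring a b h n
  have hub : a / b * b = a := div_mul_cancel₀ a hb
  have hhalf : (1 / 2 : K) * (1 - a / b) = b⁻¹ := by
    rw [show (1 : K) - a / b = 2 / b by rw [← hba]; field_simp]
    field_simp
  rw [hhalf] at E
  have hsum1 : (∑ k ∈ Finset.range (n + 2), h k * (a / b) ^ k) * b ^ (n + 1)
      = ∑ k ∈ Finset.range (n + 2), h k * a ^ k * b ^ (n + 1 - k) := by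
    rw [Finset.sum_mul]
    refine Finset.sum_congr rfl fun k hk => ?_
    have hk' : k ≤ n + 1 := by have := Finset.mem_range.mp hk; omega
    have hbk : (b : K) ^ (n + 1) = b ^ k * b ^ (n + 1 - k) := by
      rw [← pow_add]; congr 1; omega
    have hak : (a / b : K) ^ k * b ^ k = a ^ k := by
      rw [div_pow, div_mul_cancel₀ _ (pow_ne_zero k hb)]
    calc h k * (a / b) ^ k * b ^ (n + 1)
        = h k * ((a / b) ^ k * b ^ k) * b ^ (n + 1 - k) := by rw [hbk]; ring
      _ = h k * a ^ k * b ^ (n + 1 - k) := by rw [hak]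
  have hsum2 : (∑ k ∈ Finset.range (n + 1), f k * (a / b) ^ (k + 1) * (b⁻¹) ^ (n - k))
        * b ^ (n + 2)
      = a * b * ∑ k ∈ Finset.range (n + 1), f k * a ^ k := by
    rw [Finset.sum_mul, Finset.mul_sum]
    refine Finset.sum_congr rfl fun k hk => ?_
    have hk' : k ≤ n := by have := Finset.mem_range.mp hk; omega
    have hbk : (b : K) ^ (k + 1) * b ^ (n - k) * b = b ^ (n + 2) := by
      rw [← pow_add, ← pow_succ]; congr 1; omega
    have hinv : (b⁻¹ : K) ^ (n - k) * b ^ (n - k) = 1 := by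
      rw [← mul_pow, inv_mul_cancel₀ hb, one_pow]
    have hak : (a / b : K) ^ (k + 1) * b ^ (k + 1) = a ^ (k + 1) := by
      rw [div_pow, div_mul_cancel₀ _ (pow_ne_zero _ hb)]
    calc f k * (a / b) ^ (k + 1) * (b⁻¹) ^ (n - k) * b ^ (n + 2)
        = f k * ((a / b) ^ (k + 1) * b ^ (k + 1)) * ((b⁻¹) ^ (n - k) * b ^ (n - k)) * b := by
          rw [← hbk]; ring
      _ = f k * a ^ (k + 1) * 1 * b := by rw [hinv, hak]
      _ = a * b * (f k * a ^ k) := by rw [pow_succ]; ring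
  have hL : ((1 + a / b) * ∑ k ∈ Finset.range (n + 2), h k * (a / b) ^ k) * b ^ (n + 2)
      = (b + a) * ∑ k ∈ Finset.range (n + 2), h k * a ^ k * b ^ (n + 1 - k) := by
    calc ((1 + a / b) * ∑ k ∈ Finset.range (n + 2), h k * (a / b) ^ k) * b ^ (n + 2)
        = ((1 + a / b) * b)
            * ((∑ k ∈ Finset.range (n + 2), h k * (a / b) ^ k) * b ^ (n + 1)) := by
          rw [pow_succ]; ring
      _ = (b + a) * ∑ k ∈ Finset.range (n + 2), h k * a ^ k * b ^ (n + 1 - k) := by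
          rw [hsum1, add_mul, one_mul, hub]
  have hlast : h (n + 1) * (a / b) ^ (n + 2) * b ^ (n + 2) = h (n + 1) * a ^ (n + 2) := by
    rw [mul_assoc, ← mul_pow, hub]
  have E3 : (b + a) * ∑ k ∈ Finset.range (n + 2), h k * a ^ k * b ^ (n + 1 - k)
      = b ^ (n + 2) + a * b * (∑ k ∈ Finset.range (n + 1), f k * a ^ k)
        + h (n + 1) * a ^ (n + 2) := by
    calc (b + a) * ∑ k ∈ Finset.range (n + 2), h k * a ^ k * b ^ (n + 1 - k)
        = ((1 + a / b) * ∑ k ∈ Finset.range (n + 2), h k * (a / b) ^ k) * b ^ (n + 2) :=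
          hL.symm
      _ = (1 + (∑ k ∈ Finset.range (n + 1), f k * (a / b) ^ (k + 1) * (b⁻¹) ^ (n - k))
            + h (n + 1) * (a / b) ^ (n + 2)) * b ^ (n + 2) := by rw [E]
      _ = b ^ (n + 2) + a * b * (∑ k ∈ Finset.range (n + 1), f k * a ^ k)
            + h (n + 1) * a ^ (n + 2) := by
          rw [add_mul, add_mul, one_mul, hsum2, hlast]
  rw [h0, one_mul] at keyring
  have hcancel : a * b * (∑ k ∈ Finset.range (n + 1),
        (h k + h (k + 1)) * a ^ k * b ^ (n - k))
      = a * b * ∑ k ∈ Finset.range (n + 1), f k * a ^ k := by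
    linear_combination E3 - keyring
  exact (mul_left_cancel₀ (mul_ne_zero ha hb) hcancel).symm

/-- If `(1+x) ∑_{k=0}^{n+1} h_k x^k = 1 + ∑_{k=0}^n f_k x^{k+1} ((1-x)/2)^{n-k} + h_{n+1} x^{n+2}`
in `ℝ[x]` (the defining equation of the normalized cubical `h`-vector), then
`∑_{k=0}^n f_k (2y-1)^k = ∑_{k=0}^n (h_k + h_{k+1}) (2y-1)^k (2y+1)^{n-k}` in `ℝ[y]`. -/
theorem cubical_h_identity (n : ℕ) (f h : ℕ → ℝ)
    (hdef : (1 + Polynomial.X) * ∑ k ∈ Finset.range (n + 2), Polynomial.C (h k) * Polynomial.X ^ k =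
      1 + (∑ k ∈ Finset.range (n + 1), Polynomial.C (f k) * Polynomial.X ^ (k + 1) *
            (Polynomial.C (1 / 2 : ℝ) * (1 - Polynomial.X)) ^ (n - k)) +
        Polynomial.C (h (n + 1)) * Polynomial.X ^ (n + 2)) :
    ∑ k ∈ Finset.range (n + 1), Polynomial.C (f k) * (2 * Polynomial.X - 1) ^ k =
      ∑ k ∈ Finset.range (n + 1), Polynomial.C (h k + h (k + 1)) *
        (2 * Polynomial.X - 1) ^ k * (2 * Polynomial.X + 1) ^ (n - k) := by
  -- `h 0 = 1` from evaluating at `0`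
  have h0 : h 0 = 1 := by
    have h0' := congrArg (Polynomial.eval 0) hdef
    simp [Polynomial.eval_finset_sum, zero_pow_eq, Finset.sum_ite_eq'] at h0'
    exact h0'
  -- work in the field of rational functions
  have ha : (2 * RatFunc.X - 1 : RatFunc ℝ) ≠ 0 := by
    have h1 : (2 * Polynomial.X - 1 : Polynomial ℝ) ≠ 0 := fun hc => by
      simpa using congrArg (Polynomial.eval 0) hc
    simpa [map_ofNat] using RatFunc.algebraMap_ne_zero h1
  have hb : (2 * RatFunc.X + 1 : RatFunc ℝ) ≠ 0 := by
    have h1 : (2 * Polynomial.X + 1 : Polynomial ℝ) ≠ 0 := fun hc => by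
      simpa using congrArg (Polynomial.eval 0) hc
    simpa [map_ofNat] using RatFunc.algebraMap_ne_zero h1
  have E0 := congrArg
    (Polynomial.aeval ((2 * RatFunc.X - 1) / (2 * RatFunc.X + 1) : RatFunc ℝ)) hdef
  simp only [map_mul, map_add, map_one, map_pow, map_sum, Polynomial.aeval_X,
    Polynomial.aeval_C, map_sub, map_ofNat] at E0
  have hhalfC : algebraMap ℝ (RatFunc ℝ) (1 / 2 : ℝ) = (1 / 2 : RatFunc ℝ) := by
    rw [map_div₀, map_one, map_ofNat]
  rw [hhalfC] at E0
  have h2 : (2 : RatFunc ℝ) ≠ 0 := by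
    have := (algebraMap ℝ (RatFunc ℝ)).injective.ne (by norm_num : (2 : ℝ) ≠ 0)
    simpa [map_ofNat] using this
  have key := cubical_field_step n (fun k => algebraMap ℝ (RatFunc ℝ) (f k))
    (fun k => algebraMap ℝ (RatFunc ℝ) (h k))
    (2 * RatFunc.X - 1) (2 * RatFunc.X + 1) ha hb h2 (by ring)
    (by simp [h0]) E0
  apply RatFunc.algebraMap_injective ℝ
  simp only [map_sum, map_mul, map_pow, map_sub, map_add, map_one, map_ofNat,
    RatFunc.algebraMap_C, RatFunc.algebraMap_X]
  simpa [RatFunc.algebraMap_eq_C] using key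
end

section
/- Let n be a natural number and let f_0, …, f_n and h_0, …, h_{n+1} be real numbers. Then the polynomial identity (1+x) · Σ_{k=0}^{n+1} h_k x^k = 1 + Σ_{k=0}^{n} f_k x^{k+1} ((1−x)/2)^{n−k} + h_{n+1} x^{n+2} holds in ℝ[x] if and only if h_0 = 1 and the polynomial identity Σ_{k=0}^{n} f_k x^k = Σ_{k=0}^{n} (h_k + h_{k+1}) x^k (x+2)^{n−k} holds in ℝ[x]. -/
open Polynomial PowerSeries

private lemma term1 (k m : ℕ) (a t : ℝ) (ht : t + 2 ≠ 0) :
    a * (t / (t + 2)) ^ (k + 1) * (1 / 2 * (1 - t / (t + 2))) ^ m * (t + 2) ^ (k + m + 1) =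
      t * (a * t ^ k) := by
  have h1 : (1 : ℝ) / 2 * (1 - t / (t + 2)) = 1 / (t + 2) := by
    field_simp
    ring
  have h2 : (t + 2) ^ (k + m + 1) = (t + 2) ^ (k + 1) * (t + 2) ^ m := by
    rw [← pow_add]; ring_nf
  rw [h1, h2, div_pow, div_pow]
  field_simp
  ring

private lemma term2 (k m : ℕ) (a t : ℝ) (ht : t + 2 ≠ 0) :
    a * (t / (t + 2)) ^ (k + 1) * (t + 2) ^ (k + m + 1) =
      t * (a * t ^ k * (t + 2) ^ m) := by
  have h2 : (t + 2) ^ (k + m + 1) = (t + 2) ^ (k + 1) * (t + 2) ^ m := by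
    rw [← pow_add]; ring_nf
  rw [h2, div_pow]
  field_simp
  ring

private lemma term3 (k m : ℕ) (a x : ℝ) (hx : 1 - x ≠ 0) :
    a * (2 * x / (1 - x)) ^ k * (x * (1 / 2 * (1 - x)) ^ (k + m)) =
      a * x ^ (k + 1) * (1 / 2 * (1 - x)) ^ m := by
  have h2 : ((1 : ℝ) / 2 * (1 - x)) ^ (k + m) = (1 / 2 * (1 - x)) ^ k * (1 / 2 * (1 - x)) ^ m := by
    rw [← pow_add]
  rw [h2, div_pow, mul_pow, mul_pow]
  field_simp
  have e : ((1:ℝ) / 2) ^ k * 2 ^ k = 1 := by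
    rw [← mul_pow]; norm_num
  linear_combination (a * x ^ k * x) * e

private lemma term4 (k m : ℕ) (a x : ℝ) (hx : 1 - x ≠ 0) :
    a * (2 * x / (1 - x)) ^ k * (2 * x / (1 - x) + 2) ^ m * (x * (1 / 2 * (1 - x)) ^ (k + m)) =
      a * x ^ (k + 1) := by
  have h1 : 2 * x / (1 - x) + 2 = 2 / (1 - x) := by
    field_simp
    ring
  have h2 : ((1 : ℝ) / 2 * (1 - x)) ^ (k + m) = (1 / 2 * (1 - x)) ^ k * (1 / 2 * (1 - x)) ^ m := by
    rw [← pow_add]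
  rw [h1, h2, div_pow, div_pow, mul_pow]
  field_simp
  have e : ∀ j : ℕ, ((1:ℝ) / 2 + x * (-1 / 2)) ^ j * 2 ^ j = (1 - x) ^ j := fun j => by
    rw [← mul_pow]; ring
  rw [← e k, ← e m]
  ring

/-- The core equivalence between the two polynomial identities. -/
private lemma core (n : ℕ) (F G : ℕ → ℝ) :
    ((∑ k ∈ Finset.range (n + 1), Polynomial.C (G k) * Polynomial.X ^ (k + 1)) =
      ∑ k ∈ Finset.range (n + 1), Polynomial.C (F k) * Polynomial.X ^ (k + 1) *
        (Polynomial.C (1 / 2 : ℝ) * (1 - Polynomial.X)) ^ (n - k)) ↔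
    ((∑ k ∈ Finset.range (n + 1), Polynomial.C (F k) * Polynomial.X ^ k) =
      ∑ k ∈ Finset.range (n + 1), Polynomial.C (G k) * Polynomial.X ^ k *
        (Polynomial.X + 2) ^ (n - k)) := by
  constructor
  · intro H
    apply mul_left_cancel₀ (Polynomial.X_ne_zero (R := ℝ))
    apply Polynomial.eq_of_infinite_eval_eq
    apply Set.Infinite.mono _ ((Set.finite_singleton (-2 : ℝ)).infinite_compl)
    intro t ht
    simp only [Set.mem_compl_iff, Set.mem_singleton_iff] at ht
    have ht2 : t + 2 ≠ 0 := fun hc => ht (by linarith)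
    have hx := congrArg (Polynomial.eval (t / (t + 2))) H
    simp only [Polynomial.eval_finset_sum, Polynomial.eval_mul, Polynomial.eval_pow,
      Polynomial.eval_C, Polynomial.eval_X, Polynomial.eval_sub, Polynomial.eval_one] at hx
    simp only [Set.mem_setOf_eq, Polynomial.eval_mul, Polynomial.eval_X,
      Polynomial.eval_finset_sum, Polynomial.eval_pow, Polynomial.eval_C,
      Polynomial.eval_add, Polynomial.eval_ofNat]
    rw [Finset.mul_sum, Finset.mul_sum]
    calc ∑ k ∈ Finset.range (n + 1), t * (F k * t ^ k)
        = ∑ k ∈ Finset.range (n + 1), F k * (t / (t + 2)) ^ (k + 1) *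
            (1 / 2 * (1 - t / (t + 2))) ^ (n - k) * (t + 2) ^ (n + 1) := by
          refine Finset.sum_congr rfl fun k hk => ?_
          have hkn : k ≤ n := by
            have := Finset.mem_range.mp hk; omega
          obtain ⟨m, rfl⟩ : ∃ m, n = k + m := ⟨n - k, by omega⟩
          have hm : k + m - k = m := by omega
          rw [hm, term1 k m (F k) t ht2]
      _ = ∑ k ∈ Finset.range (n + 1), G k * (t / (t + 2)) ^ (k + 1) * (t + 2) ^ (n + 1) := by
          rw [← Finset.sum_mul, ← Finset.sum_mul, ← hx]
      _ = ∑ k ∈ Finset.range (n + 1), t * (G k * t ^ k * (t + 2) ^ (n - k)) := by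
          refine Finset.sum_congr rfl fun k hk => ?_
          have hkn : k ≤ n := by
            have := Finset.mem_range.mp hk; omega
          obtain ⟨m, rfl⟩ : ∃ m, n = k + m := ⟨n - k, by omega⟩
          have hm : k + m - k = m := by omega
          rw [hm, term2 k m (G k) t ht2]
  · intro H
    apply Polynomial.eq_of_infinite_eval_eq
    apply Set.Infinite.mono _ ((Set.finite_singleton (1 : ℝ)).infinite_compl)
    intro x hxs
    simp only [Set.mem_compl_iff, Set.mem_singleton_iff] at hxs
    have hx1 : (1 : ℝ) - x ≠ 0 := fun hc => hxs (by linarith)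
    have ht := congrArg (Polynomial.eval (2 * x / (1 - x))) H
    simp only [Polynomial.eval_finset_sum, Polynomial.eval_mul, Polynomial.eval_pow,
      Polynomial.eval_C, Polynomial.eval_X, Polynomial.eval_add, Polynomial.eval_ofNat] at ht
    simp only [Set.mem_setOf_eq, Polynomial.eval_finset_sum, Polynomial.eval_mul,
      Polynomial.eval_pow, Polynomial.eval_C, Polynomial.eval_X, Polynomial.eval_sub,
      Polynomial.eval_one]
    calc ∑ k ∈ Finset.range (n + 1), G k * x ^ (k + 1)
        = ∑ k ∈ Finset.range (n + 1), G k * (2 * x / (1 - x)) ^ k *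
            (2 * x / (1 - x) + 2) ^ (n - k) * (x * (1 / 2 * (1 - x)) ^ n) := by
          refine Finset.sum_congr rfl fun k hk => ?_
          have hkn : k ≤ n := by
            have := Finset.mem_range.mp hk; omega
          obtain ⟨m, rfl⟩ : ∃ m, n = k + m := ⟨n - k, by omega⟩
          have hm : k + m - k = m := by omega
          rw [hm, term4 k m (G k) x hx1]
      _ = ∑ k ∈ Finset.range (n + 1), F k * (2 * x / (1 - x)) ^ k *
            (x * (1 / 2 * (1 - x)) ^ n) := by
          rw [← Finset.sum_mul, ← Finset.sum_mul, ← ht]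
      _ = ∑ k ∈ Finset.range (n + 1), F k * x ^ (k + 1) * (1 / 2 * (1 - x)) ^ (n - k) := by
          refine Finset.sum_congr rfl fun k hk => ?_
          have hkn : k ≤ n := by
            have := Finset.mem_range.mp hk; omega
          obtain ⟨m, rfl⟩ : ∃ m, n = k + m := ⟨n - k, by omega⟩
          have hm : k + m - k = m := by omega
          rw [hm, term3 k m (F k) x hx1]

/-- The defining equation of the normalized cubical `h`-vector,
`(1+x) ∑_{k=0}^{n+1} h_k x^k = 1 + ∑_{k=0}^n f_k x^{k+1} ((1-x)/2)^{n-k} + h_{n+1} x^{n+2}`,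
holds in `ℝ[x]` if and only if `h_0 = 1` and
`∑_{k=0}^n f_k x^k = ∑_{k=0}^n (h_k + h_{k+1}) x^k (x+2)^{n-k}` holds in `ℝ[x]`. -/
theorem cubical_h_equivalent_definition (n : ℕ) (f h : ℕ → ℝ) :
    ((1 + Polynomial.X) * ∑ k ∈ Finset.range (n + 2), Polynomial.C (h k) * Polynomial.X ^ k =
      1 + (∑ k ∈ Finset.range (n + 1), Polynomial.C (f k) * Polynomial.X ^ (k + 1) *
            (Polynomial.C (1 / 2 : ℝ) * (1 - Polynomial.X)) ^ (n - k)) +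
        Polynomial.C (h (n + 1)) * Polynomial.X ^ (n + 2)) ↔
      (h 0 = 1 ∧
        ∑ k ∈ Finset.range (n + 1), Polynomial.C (f k) * Polynomial.X ^ k =
          ∑ k ∈ Finset.range (n + 1), Polynomial.C (h k + h (k + 1)) *
            Polynomial.X ^ k * (Polynomial.X + 2) ^ (n - k)) := by
  set A : Polynomial ℝ :=
    ∑ k ∈ Finset.range (n + 1), Polynomial.C (h k + h (k + 1)) * Polynomial.X ^ (k + 1) with hA
  set B : Polynomial ℝ :=
    ∑ k ∈ Finset.range (n + 1), Polynomial.C (f k) * Polynomial.X ^ (k + 1) *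
      (Polynomial.C (1 / 2 : ℝ) * (1 - Polynomial.X)) ^ (n - k) with hB
  have expand : (1 + Polynomial.X) * ∑ k ∈ Finset.range (n + 2),
      Polynomial.C (h k) * Polynomial.X ^ k =
      Polynomial.C (h 0) + A + Polynomial.C (h (n + 1)) * Polynomial.X ^ (n + 2) := by
    rw [add_mul, one_mul]
    have hS : (∑ k ∈ Finset.range (n + 2), Polynomial.C (h k) * Polynomial.X ^ k) =
        Polynomial.C (h 0) * Polynomial.X ^ 0 +
          ∑ k ∈ Finset.range (n + 1), Polynomial.C (h (k + 1)) * Polynomial.X ^ (k + 1) := by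
      rw [Finset.sum_range_succ' (fun k => Polynomial.C (h k) * Polynomial.X ^ k) (n + 1)]
      ring
    have hXS : Polynomial.X * ∑ k ∈ Finset.range (n + 2),
        Polynomial.C (h k) * Polynomial.X ^ k =
        (∑ k ∈ Finset.range (n + 1), Polynomial.C (h k) * Polynomial.X ^ (k + 1)) +
          Polynomial.C (h (n + 1)) * Polynomial.X ^ (n + 2) := by
      rw [Finset.mul_sum, Finset.sum_range_succ]
      congr 1
      · exact Finset.sum_congr rfl fun k _ => by ring
      · ring
    have hA2 : A = (∑ k ∈ Finset.range (n + 1), Polynomial.C (h k) * Polynomial.X ^ (k + 1)) +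
        ∑ k ∈ Finset.range (n + 1), Polynomial.C (h (k + 1)) * Polynomial.X ^ (k + 1) := by
      rw [hA, ← Finset.sum_add_distrib]
      exact Finset.sum_congr rfl fun k _ => by rw [Polynomial.C_add]; ring
    rw [hXS, hS, hA2]
    ring
  rw [expand, add_left_inj]
  constructor
  · intro H
    have h0 : h 0 = 1 := by
      have := congrArg (Polynomial.eval 0) H
      simpa [hA, hB, Polynomial.eval_finset_sum] using this
    have hAB : A = B := by
      rw [h0, map_one] at H
      exact add_left_cancel H
    exact ⟨h0, (core n f (fun k => h k + h (k + 1))).mp hAB⟩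
  · rintro ⟨h0, h2⟩
    rw [h0, map_one]
    congr 1
    exact (core n f (fun k => h k + h (k + 1))).mpr h2
end
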